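/- Let (H,R,θ) be a factorizable ribbon Hopf algebra over a field k and let f : H → k be a character. Then B_f is a cylinder-braided right coideal subalgebra of H with universal K-matrix K = (f⊗id)((1⊗θ^{-1})·R·R_21): the element K is invertible, K·b = b·K for every b ∈ B_f, and Δ(K) = (K⊗1)·R·(1⊗K)·R_21 in H⊗H; in particular K satisfies the reflection equation (K⊗1)·R·(1⊗K)·R_21 = R·(1⊗K)·R_21·(K⊗1). -/

import Mathlib

/- Braided bialgebras: basic tensor-leg maps and the universal R-matrix axioms. -/

open scoped TensorProduct

noncomputable section

variable (k H : Type*) [Field k] [Ring H]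

section BialgebraDefs

variable [Bialgebra k H]
/-- The flip `a ⊗ b ↦ b ⊗ a` on `H ⊗[k] H`, as an algebra homomorphism. -/
def tflip : H ⊗[k] H →ₐ[k] H ⊗[k] H := (Algebra.TensorProduct.comm k H H).toAlgHom

/-- `s ⊗ t ↦ s ⊗ t ⊗ 1 : H ⊗ H → H ⊗ H ⊗ H`. -/
def leg12 : H ⊗[k] H →ₐ[k] H ⊗[k] (H ⊗[k] H) :=
  Algebra.TensorProduct.map (AlgHom.id k H) Algebra.TensorProduct.includeLeft

/-- `s ⊗ t ↦ s ⊗ 1 ⊗ t : H ⊗ H → H ⊗ H ⊗ H`. -/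
def leg13 : H ⊗[k] H →ₐ[k] H ⊗[k] (H ⊗[k] H) :=
  Algebra.TensorProduct.map (AlgHom.id k H) Algebra.TensorProduct.includeRight

/-- `s ⊗ t ↦ 1 ⊗ s ⊗ t : H ⊗ H → H ⊗ H ⊗ H`. -/
def leg23 : H ⊗[k] H →ₐ[k] H ⊗[k] (H ⊗[k] H) :=
  Algebra.TensorProduct.includeRight

/-- `Δ ⊗ id : H ⊗ H → H ⊗ H ⊗ H`. -/
def comulLeft : H ⊗[k] H →ₐ[k] H ⊗[k] (H ⊗[k] H) :=
  (Algebra.TensorProduct.assoc k k k H H H).toAlgHom.comp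
    (Algebra.TensorProduct.map (Bialgebra.comulAlgHom k H) (AlgHom.id k H))

/-- `id ⊗ Δ : H ⊗ H → H ⊗ H ⊗ H`. -/
def comulRight : H ⊗[k] H →ₐ[k] H ⊗[k] (H ⊗[k] H) :=
  Algebra.TensorProduct.map (AlgHom.id k H) (Bialgebra.comulAlgHom k H)

/-- `(H, R)` is a braided bialgebra with `R⁻¹ = Rinv`:  `R` is an invertible element of
`H ⊗ H` satisfying `Δ(x) · R = R · Δ^op(x)` for all `x` and the two hexagon identities
`(Δ ⊗ id)(R) = R₂₃ · R₁₃` and `(id ⊗ Δ)(R) = R₁₂ · R₁₃`. -/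
def IsUniversalRMatrix (R Rinv : H ⊗[k] H) : Prop :=
  R * Rinv = 1 ∧ Rinv * R = 1 ∧
  (∀ x : H, Bialgebra.comulAlgHom k H x * R = R * tflip k H (Bialgebra.comulAlgHom k H x)) ∧
  comulLeft k H R = leg23 k H R * leg13 k H R ∧
  comulRight k H R = leg12 k H R * leg13 k H R

/-- `ψ ⊗ id : H ⊗ H → H`, `a ⊗ b ↦ ψ(a) • b`. -/
def dualTensorId (ψ : H →ₗ[k] k) : H ⊗[k] H →ₗ[k] H :=
  (TensorProduct.lid k H).toLinearMap.comp (TensorProduct.map ψ LinearMap.id)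

end BialgebraDefs

section Hopf


section Aux
variable {k H : Type*} [Field k] [Ring H] [Bialgebra k H]

/-- `f ⊗ id : H ⊗ H → H` as an algebra hom. -/
noncomputable def Faug (f : H →ₐ[k] k) : H ⊗[k] H →ₐ[k] H :=
  (Algebra.TensorProduct.lid k H).toAlgHom.comp
    (Algebra.TensorProduct.map f (AlgHom.id k H))

@[simp] lemma Faug_tmul (f : H →ₐ[k] k) (a b : H) : Faug f (a ⊗ₜ[k] b) = f a • b := by
  simp [Faug]

lemma dualTensorId_eq (f : H →ₐ[k] k) (X : H ⊗[k] H) :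
    dualTensorId k H f.toLinearMap X = Faug f X := by
  induction X using TensorProduct.induction_on with
  | zero => simp [dualTensorId]
  | tmul a b => simp [dualTensorId]
  | add x y hx hy => rw [map_add, map_add, hx, hy]

/-- `f ⊗ id ⊗ id : H ⊗ H ⊗ H → H ⊗ H` as an algebra hom. -/
noncomputable def Gaug (f : H →ₐ[k] k) : H ⊗[k] (H ⊗[k] H) →ₐ[k] H ⊗[k] H :=
  (Algebra.TensorProduct.lid k (H ⊗[k] H)).toAlgHom.comp
    (Algebra.TensorProduct.map f (AlgHom.id k (H ⊗[k] H)))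

@[simp] lemma Gaug_tmul (f : H →ₐ[k] k) (a : H) (b : H ⊗[k] H) :
    Gaug f (a ⊗ₜ[k] b) = f a • b := by
  simp [Gaug]

end Aux
section Aux2
variable {k H : Type*} [Field k] [Ring H] [Bialgebra k H]

lemma Gaug_leg12 (f : H →ₐ[k] k) (X : H ⊗[k] H) :
    Gaug f (leg12 k H X) = (Faug f X) ⊗ₜ[k] (1 : H) := by
  induction X using TensorProduct.induction_on with
  | zero => simp [leg12]
  | tmul a b => simp [leg12, TensorProduct.smul_tmul']
  | add x y hx hy => rw [map_add, map_add, map_add, TensorProduct.add_tmul, hx, hy]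

lemma Gaug_leg13 (f : H →ₐ[k] k) (X : H ⊗[k] H) :
    Gaug f (leg13 k H X) = (1 : H) ⊗ₜ[k] (Faug f X) := by
  induction X using TensorProduct.induction_on with
  | zero => simp [leg13]
  | tmul a b => simp [leg13, TensorProduct.tmul_smul]
  | add x y hx hy => rw [map_add, map_add, map_add, TensorProduct.tmul_add, hx, hy]

lemma Gaug_leg23 (f : H →ₐ[k] k) (X : H ⊗[k] H) :
    Gaug f (leg23 k H X) = X := by
  simp [leg23]

lemma Gaug_comulRight (f : H →ₐ[k] k) (X : H ⊗[k] H) :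
    Gaug f (comulRight k H X) = Bialgebra.comulAlgHom k H (Faug f X) := by
  induction X using TensorProduct.induction_on with
  | zero => simp [comulRight]
  | tmul a b => simp [comulRight]
  | add x y hx hy => simp [map_add, hx, hy]

end Aux2
section Aux3
variable {k H : Type*} [Field k] [Ring H] [Bialgebra k H]

/-- swap legs 2 and 3. -/
noncomputable def flip23 : H ⊗[k] (H ⊗[k] H) →ₐ[k] H ⊗[k] (H ⊗[k] H) :=
  Algebra.TensorProduct.map (AlgHom.id k H) (Algebra.TensorProduct.comm k H H).toAlgHom

/-- swap legs 1 and 2. -/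
noncomputable def flip12 : H ⊗[k] (H ⊗[k] H) →ₐ[k] H ⊗[k] (H ⊗[k] H) :=
  ((Algebra.TensorProduct.assoc k k k H H H).toAlgHom.comp
    (Algebra.TensorProduct.map (Algebra.TensorProduct.comm k H H).toAlgHom (AlgHom.id k H))).comp
    (Algebra.TensorProduct.assoc k k k H H H).symm.toAlgHom

@[simp] lemma flip23_tmul (a b c : H) :
    (flip23 : H ⊗[k] (H ⊗[k] H) →ₐ[k] _) (a ⊗ₜ[k] (b ⊗ₜ[k] c)) = a ⊗ₜ[k] (c ⊗ₜ[k] b) := by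
  simp [flip23]

lemma flip12_assoc_tmul (u : H ⊗[k] H) (y : H) :
    (flip12 : H ⊗[k] (H ⊗[k] H) →ₐ[k] _)
      ((Algebra.TensorProduct.assoc k k k H H H) (u ⊗ₜ[k] y))
      = (Algebra.TensorProduct.assoc k k k H H H) ((tflip k H u) ⊗ₜ[k] y) := by
  induction u using TensorProduct.induction_on with
  | zero => simp
  | tmul a b => simp [flip12, tflip]
  | add x y hx hy => simp [TensorProduct.add_tmul, map_add, hx, hy]

@[simp] lemma flip12_tmul (a b c : H) :
    (flip12 : H ⊗[k] (H ⊗[k] H) →ₐ[k] _) (a ⊗ₜ[k] (b ⊗ₜ[k] c)) = b ⊗ₜ[k] (a ⊗ₜ[k] c) := by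
  have := flip12_assoc_tmul (k := k) (H := H) (a ⊗ₜ[k] b) c
  simpa [tflip] using this

end Aux3
section Aux4
variable {k H : Type*} [Field k] [Ring H] [Bialgebra k H]

lemma comulLeft_tmul (x y : H) :
    comulLeft k H (x ⊗ₜ[k] y)
      = (Algebra.TensorProduct.assoc k k k H H H) ((Bialgebra.comulAlgHom k H x) ⊗ₜ[k] y) := by
  simp [comulLeft]

lemma leg12_eq_assoc (X : H ⊗[k] H) :
    leg12 k H X = (Algebra.TensorProduct.assoc k k k H H H) (X ⊗ₜ[k] (1 : H)) := by
  induction X using TensorProduct.induction_on with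
  | zero => simp [leg12]
  | tmul a b => simp [leg12]
  | add x y hx hy => simp [TensorProduct.add_tmul, map_add, hx, hy]

/-- `Δᵒᵖ ⊗ id`. -/
noncomputable def comulLeftOp : H ⊗[k] H →ₐ[k] H ⊗[k] (H ⊗[k] H) :=
  (Algebra.TensorProduct.assoc k k k H H H).toAlgHom.comp
    (Algebra.TensorProduct.map ((tflip k H).comp (Bialgebra.comulAlgHom k H)) (AlgHom.id k H))

lemma comulLeftOp_tmul (x y : H) :
    comulLeftOp (x ⊗ₜ[k] y)
      = (Algebra.TensorProduct.assoc k k k H H H) ((tflip k H (Bialgebra.comulAlgHom k H x)) ⊗ₜ[k] y) := by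
  simp [comulLeftOp]

lemma comulLeftOp_eq (X : H ⊗[k] H) : comulLeftOp X = flip12 (comulLeft k H X) := by
  induction X using TensorProduct.induction_on with
  | zero => simp
  | tmul a b => rw [comulLeftOp_tmul, comulLeft_tmul, flip12_assoc_tmul]
  | add x y hx hy => simp [map_add, hx, hy]

/-- cyclic rotation `a⊗b⊗c ↦ c⊗a⊗b` moves `comulLeft` to `comulRight ∘ tflip`. -/
lemma rot_comulLeft (X : H ⊗[k] H) :
    flip12 (flip23 (comulLeft k H X)) = comulRight k H (tflip k H X) := by
  have key : ∀ (u : H ⊗[k] H) (y : H),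
      flip12 (flip23 ((Algebra.TensorProduct.assoc k k k H H H) (u ⊗ₜ[k] y))) = y ⊗ₜ[k] u := by
    intro u y
    induction u using TensorProduct.induction_on with
    | zero => simp
    | tmul a b => simp
    | add u v hu hv => simp [TensorProduct.add_tmul, TensorProduct.tmul_add, map_add, hu, hv]
  induction X using TensorProduct.induction_on with
  | zero => simp
  | tmul a b => rw [comulLeft_tmul, key]; simp [comulRight, tflip]
  | add x y hx hy => simp [map_add, hx, hy]

lemma rot_leg23 (X : H ⊗[k] H) :
    flip12 (flip23 (leg23 k H X)) = leg13 k H (tflip k H X) := by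
  induction X using TensorProduct.induction_on with
  | zero => simp
  | tmul a b => simp [leg23, leg13, tflip]
  | add x y hx hy => simp [map_add, hx, hy]

lemma rot_leg13 (X : H ⊗[k] H) :
    flip12 (flip23 (leg13 k H X)) = leg12 k H (tflip k H X) := by
  induction X using TensorProduct.induction_on with
  | zero => simp
  | tmul a b => simp [leg13, leg12, tflip]
  | add x y hx hy => simp [map_add, hx, hy]

lemma flip12_leg23 (X : H ⊗[k] H) : flip12 (leg23 k H X) = leg13 k H X := by
  induction X using TensorProduct.induction_on with
  | zero => simp
  | tmul a b => simp [leg23, leg13]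
  | add x y hx hy => simp [map_add, hx, hy]

lemma flip12_leg13 (X : H ⊗[k] H) : flip12 (leg13 k H X) = leg23 k H X := by
  induction X using TensorProduct.induction_on with
  | zero => simp
  | tmul a b => simp [leg23, leg13]
  | add x y hx hy => simp [map_add, hx, hy]

lemma flip23_leg12 (X : H ⊗[k] H) : flip23 (leg12 k H X) = leg13 k H X := by
  induction X using TensorProduct.induction_on with
  | zero => simp
  | tmul a b => simp [leg12, leg13]
  | add x y hx hy => simp [map_add, hx, hy]

lemma flip23_leg13 (X : H ⊗[k] H) : flip23 (leg13 k H X) = leg12 k H X := by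
  induction X using TensorProduct.induction_on with
  | zero => simp
  | tmul a b => simp [leg12, leg13]
  | add x y hx hy => simp [map_add, hx, hy]

lemma flip23_leg23 (X : H ⊗[k] H) : flip23 (leg23 k H X) = leg23 k H (tflip k H X) := by
  induction X using TensorProduct.induction_on with
  | zero => simp
  | tmul a b => simp [leg23, tflip]
  | add x y hx hy => simp [map_add, hx, hy]

end Aux4
section Aux5
variable {k H : Type*} [Field k] [Ring H] [Bialgebra k H]

@[simp] lemma tflip_tmul (a b : H) : tflip k H (a ⊗ₜ[k] b) = b ⊗ₜ[k] a := rfl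

@[simp] lemma tflip_tflip (X : H ⊗[k] H) : tflip k H (tflip k H X) = X := by
  induction X using TensorProduct.induction_on with
  | zero => simp
  | tmul a b => rfl
  | add x y hx hy => simp [map_add, hx, hy]

/-- `id ⊗ Δᵒᵖ`. -/
noncomputable def comulRightOp : H ⊗[k] H →ₐ[k] H ⊗[k] (H ⊗[k] H) :=
  Algebra.TensorProduct.map (AlgHom.id k H) ((tflip k H).comp (Bialgebra.comulAlgHom k H))

lemma Gaug_comulRightOp (f : H →ₐ[k] k) (X : H ⊗[k] H) :
    Gaug f (comulRightOp X) = tflip k H (Bialgebra.comulAlgHom k H (Faug f X)) := by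
  induction X using TensorProduct.induction_on with
  | zero => simp [comulRightOp]
  | tmul a b => simp [comulRightOp]
  | add x y hx hy => simp [map_add, hx, hy]

variable (R : H ⊗[k] H)
  (hax : ∀ x : H, Bialgebra.comulAlgHom k H x * R
    = R * tflip k H (Bialgebra.comulAlgHom k H x))

include hax in
lemma Fam1 (X : H ⊗[k] H) :
    comulLeft k H X * leg12 k H R = leg12 k H R * comulLeftOp X := by
  induction X using TensorProduct.induction_on with
  | zero => simp
  | tmul x y =>
      rw [comulLeft_tmul, comulLeftOp_tmul, leg12_eq_assoc, ← map_mul, ← map_mul,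
        Algebra.TensorProduct.tmul_mul_tmul, Algebra.TensorProduct.tmul_mul_tmul,
        hax x, mul_one, one_mul]
  | add x y hx hy => simp [map_add, add_mul, mul_add, hx, hy]

include hax in
lemma Fam1' (X : H ⊗[k] H) :
    comulLeftOp X * leg12 k H (tflip k H R) = leg12 k H (tflip k H R) * comulLeft k H X := by
  have hax' : ∀ x : H, tflip k H (Bialgebra.comulAlgHom k H x) * tflip k H R
      = tflip k H R * Bialgebra.comulAlgHom k H x := by
    intro x
    have := congrArg (tflip k H) (hax x)
    rw [map_mul, map_mul, tflip_tflip] at this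
    exact this
  induction X using TensorProduct.induction_on with
  | zero => simp
  | tmul x y =>
      rw [comulLeft_tmul, comulLeftOp_tmul, leg12_eq_assoc, ← map_mul, ← map_mul,
        Algebra.TensorProduct.tmul_mul_tmul, Algebra.TensorProduct.tmul_mul_tmul,
        hax' x, mul_one, one_mul]
  | add x y hx hy => simp [map_add, add_mul, mul_add, hx, hy]

include hax in
lemma Fam3 (X : H ⊗[k] H) :
    comulRight k H X * leg23 k H R = leg23 k H R * comulRightOp X := by
  induction X using TensorProduct.induction_on with
  | zero => simp
  | tmul x y =>
      show _ * ((1:H) ⊗ₜ[k] R) = ((1:H) ⊗ₜ[k] R) * _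
      rw [comulRight, comulRightOp, Algebra.TensorProduct.map_tmul,
        Algebra.TensorProduct.map_tmul, Algebra.TensorProduct.tmul_mul_tmul,
        Algebra.TensorProduct.tmul_mul_tmul, AlgHom.comp_apply, hax y, mul_one, one_mul]
  | add x y hx hy => simp [map_add, add_mul, mul_add, hx, hy]

include hax in
lemma Fam3' (X : H ⊗[k] H) :
    comulRightOp X * leg23 k H (tflip k H R) = leg23 k H (tflip k H R) * comulRight k H X := by
  have hax' : ∀ x : H, tflip k H (Bialgebra.comulAlgHom k H x) * tflip k H R
      = tflip k H R * Bialgebra.comulAlgHom k H x := by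
    intro x
    have := congrArg (tflip k H) (hax x)
    rw [map_mul, map_mul, tflip_tflip] at this
    exact this
  induction X using TensorProduct.induction_on with
  | zero => simp
  | tmul x y =>
      show _ * ((1:H) ⊗ₜ[k] _) = ((1:H) ⊗ₜ[k] _) * _
      rw [comulRight, comulRightOp, Algebra.TensorProduct.map_tmul,
        Algebra.TensorProduct.map_tmul, Algebra.TensorProduct.tmul_mul_tmul,
        Algebra.TensorProduct.tmul_mul_tmul, AlgHom.comp_apply, hax' y, mul_one, one_mul]
  | add x y hx hy => simp [map_add, add_mul, mul_add, hx, hy]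

end Aux5
section Aux6
variable {k H : Type*} [Field k] [Ring H] [Bialgebra k H]
variable (R : H ⊗[k] H)

lemma hexOp (hhexA : comulLeft k H R = leg23 k H R * leg13 k H R) :
    comulLeftOp R = leg13 k H R * leg23 k H R := by
  rw [comulLeftOp_eq, hhexA, map_mul, flip12_leg23, flip12_leg13]

lemma hexBar (hhexA : comulLeft k H R = leg23 k H R * leg13 k H R) :
    comulRight k H (tflip k H R) = leg13 k H (tflip k H R) * leg12 k H (tflip k H R) := by
  rw [← rot_comulLeft, hhexA, map_mul, map_mul, rot_leg23, rot_leg13]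

variable (f : H →ₐ[k] k)
lemma relA (hhexB : comulRight k H R = leg12 k H R * leg13 k H R) :
    Bialgebra.comulAlgHom k H (Faug f R) = (Faug f R) ⊗ₜ[k] (Faug f R) := by
  rw [← Gaug_comulRight, hhexB, map_mul, Gaug_leg12, Gaug_leg13,
    Algebra.TensorProduct.tmul_mul_tmul, mul_one, one_mul]

lemma relB (hhexA : comulLeft k H R = leg23 k H R * leg13 k H R) :
    Bialgebra.comulAlgHom k H (Faug f (tflip k H R))
      = (Faug f (tflip k H R)) ⊗ₜ[k] (Faug f (tflip k H R)) := by
  rw [← Gaug_comulRight, hexBar R hhexA, map_mul, Gaug_leg12, Gaug_leg13,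
    Algebra.TensorProduct.tmul_mul_tmul, mul_one, one_mul]

variable (hax : ∀ x : H, Bialgebra.comulAlgHom k H x * R
    = R * tflip k H (Bialgebra.comulAlgHom k H x))

include hax in
lemma relFwd (X : H ⊗[k] H) :
    Bialgebra.comulAlgHom k H (Faug f X) * R
      = R * tflip k H (Bialgebra.comulAlgHom k H (Faug f X)) := by
  have h := congrArg (Gaug f) (Fam3 R hax X)
  rwa [map_mul, map_mul, Gaug_comulRight, Gaug_leg23, Gaug_comulRightOp] at h

include hax in
lemma relBwd (X : H ⊗[k] H) :
    tflip k H (Bialgebra.comulAlgHom k H (Faug f X)) * tflip k H R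
      = tflip k H R * Bialgebra.comulAlgHom k H (Faug f X) := by
  have h := congrArg (Gaug f) (Fam3' R hax X)
  rwa [map_mul, map_mul, Gaug_comulRight, Gaug_leg23, Gaug_comulRightOp] at h

include hax in
lemma relI (hhexA : comulLeft k H R = leg23 k H R * leg13 k H R) :
    ((1:H) ⊗ₜ[k] Faug f R) * R * (Faug f (tflip k H R) ⊗ₜ[k] (1:H))
      = (Faug f (tflip k H R) ⊗ₜ[k] (1:H)) * (R * ((1:H) ⊗ₜ[k] Faug f R)) := by
  have h := congrArg (Gaug f) (Fam1' R hax R)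
  rw [hexOp R hhexA, hhexA] at h
  simp only [map_mul, Gaug_leg12, Gaug_leg13, Gaug_leg23] at h
  simpa [mul_assoc] using h

include hax in
lemma relVI (hhexA : comulLeft k H R = leg23 k H R * leg13 k H R) :
    (Faug f R ⊗ₜ[k] (1:H)) * tflip k H R * ((1:H) ⊗ₜ[k] Faug f (tflip k H R))
      = ((1:H) ⊗ₜ[k] Faug f (tflip k H R)) * (tflip k H R * (Faug f R ⊗ₜ[k] (1:H))) := by
  have h := congrArg flip23 (Fam1' R hax R)
  rw [hexOp R hhexA, hhexA] at h
  simp only [map_mul, flip23_leg13, flip23_leg23, flip23_leg12] at h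
  have h2 := congrArg (Gaug f) h
  simp only [map_mul, Gaug_leg12, Gaug_leg13, Gaug_leg23] at h2
  simpa [mul_assoc] using h2

end Aux6
section Aux7
variable {k H : Type*} [Field k] [Ring H] [Bialgebra k H]

lemma central_right {c : H} (hc : ∀ x : H, c * x = x * c) (Z : H ⊗[k] H) :
    ((1:H) ⊗ₜ[k] c) * Z = Z * ((1:H) ⊗ₜ[k] c) := by
  induction Z using TensorProduct.induction_on with
  | zero => simp
  | tmul a b => simp [Algebra.TensorProduct.tmul_mul_tmul, hc b]
  | add x y hx hy => simp [add_mul, mul_add, hx, hy]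

lemma central_left {c : H} (hc : ∀ x : H, c * x = x * c) (Z : H ⊗[k] H) :
    (c ⊗ₜ[k] (1:H)) * Z = Z * (c ⊗ₜ[k] (1:H)) := by
  induction Z using TensorProduct.induction_on with
  | zero => simp
  | tmul a b => simp [Algebra.TensorProduct.tmul_mul_tmul, hc a]
  | add x y hx hy => simp [add_mul, mul_add, hx, hy]

end Aux7

section Hopf

variable [HopfAlgebra k H]

set_option maxHeartbeats 2000000 in
/-- if `(H, R, θ)` is a factorizable ribbon Hopf algebra and `f : H → k`
is a character, then `B_f = {(f ⊗ id)(Δ h) : h ∈ H}` is a cylinder-braided right coideal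
subalgebra with universal K-matrix `K = (f ⊗ id)((1 ⊗ θ⁻¹) · R · R₂₁)`: `K` is
invertible, commutes with `B_f`, satisfies `Δ(K) = (K ⊗ 1) · R · (1 ⊗ K) · R₂₁`, and in
particular satisfies the reflection equation. -/
theorem Bf_cylinder_braided_of_factorizable_ribbon
    (R Rinv : H ⊗[k] H) (hR : IsUniversalRMatrix k H R Rinv)
    (hfact : Function.Bijective
      (fun ψ : Module.Dual k H => dualTensorId k H ψ (R * tflip k H R)))
    (θ θinv : H) (hθ : θ * θinv = 1) (hθ' : θinv * θ = 1)
    (hcentral : ∀ x : H, θ * x = x * θ)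
    (hΔθ : Bialgebra.comulAlgHom k H θ
      = (tflip k H Rinv * Rinv) * (θ ⊗ₜ[k] θ))
    (hεθ : Coalgebra.counit (R := k) (A := H) θ = 1)
    (hSθ : HopfAlgebra.antipode (R := k) (A := H) θ = θ)
    (f : H →ₐ[k] k)
    (K : H)
    (hKdef : K = dualTensorId k H f.toLinearMap (((1 : H) ⊗ₜ[k] θinv) * R * tflip k H R)) :
    IsUnit K ∧
    (∀ b ∈ Set.range
        (fun h : H => dualTensorId k H f.toLinearMap (Bialgebra.comulAlgHom k H h)),
      K * b = b * K) ∧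
    Bialgebra.comulAlgHom k H K
      = (K ⊗ₜ[k] (1 : H)) * R * ((1 : H) ⊗ₜ[k] K) * tflip k H R ∧
    (K ⊗ₜ[k] (1 : H)) * R * ((1 : H) ⊗ₜ[k] K) * tflip k H R
      = R * ((1 : H) ⊗ₜ[k] K) * tflip k H R * (K ⊗ₜ[k] (1 : H)) := by
  obtain ⟨hR1, hR2, hax, hhexA, hhexB⟩ := hR
  -- θinv is central
  have hθinvc : ∀ x : H, θinv * x = x * θinv := by
    intro x
    calc θinv * x = θinv * x * (θ * θinv) := by rw [hθ, mul_one]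
      _ = θinv * (x * θ) * θinv := by simp only [mul_assoc]
      _ = θinv * (θ * x) * θinv := by rw [hcentral x]
      _ = x * θinv := by rw [← mul_assoc, hθ', one_mul]
  have hax' : ∀ x : H, tflip k H (Bialgebra.comulAlgHom k H x) * tflip k H R
      = tflip k H R * Bialgebra.comulAlgHom k H x := by
    intro x
    have h := congrArg (tflip k H) (hax x)
    rw [map_mul, map_mul, tflip_tflip] at h
    exact h
  have hK : K = θinv * (Faug f R * Faug f (tflip k H R)) := by
    rw [hKdef, dualTensorId_eq, map_mul, map_mul, mul_assoc]
    congr 1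
    simp
  -- units
  have hUρ : IsUnit (Faug f R) :=
    ⟨⟨Faug f R, Faug f Rinv, by rw [← map_mul, hR1, map_one],
      by rw [← map_mul, hR2, map_one]⟩, rfl⟩
  have hUσ : IsUnit (Faug f (tflip k H R)) :=
    ⟨⟨Faug f (tflip k H R), Faug f (tflip k H Rinv),
      by rw [← map_mul, ← map_mul, hR1, map_one, map_one],
      by rw [← map_mul, ← map_mul, hR2, map_one, map_one]⟩, rfl⟩
  have hUθ : IsUnit θinv := ⟨⟨θinv, θ, hθ', hθ⟩, rfl⟩
  -- basic grouplike facts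
  have hA : Bialgebra.comulAlgHom k H (Faug f R) = Faug f R ⊗ₜ[k] Faug f R :=
    relA R f hhexB
  have hB : Bialgebra.comulAlgHom k H (Faug f (tflip k H R))
      = Faug f (tflip k H R) ⊗ₜ[k] Faug f (tflip k H R) := relB R f hhexA
  have hPm : (Faug f R ⊗ₜ[k] (1:H)) * ((1:H) ⊗ₜ[k] Faug f R)
      = Faug f R ⊗ₜ[k] Faug f R := by simp
  have hPc : (((1:H) ⊗ₜ[k] Faug f R)) * (Faug f R ⊗ₜ[k] (1:H))
      = Faug f R ⊗ₜ[k] Faug f R := by simp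
  have hQm : (Faug f (tflip k H R) ⊗ₜ[k] (1:H)) * ((1:H) ⊗ₜ[k] Faug f (tflip k H R))
      = Faug f (tflip k H R) ⊗ₜ[k] Faug f (tflip k H R) := by simp
  have hQc : (((1:H) ⊗ₜ[k] Faug f (tflip k H R))) * (Faug f (tflip k H R) ⊗ₜ[k] (1:H))
      = Faug f (tflip k H R) ⊗ₜ[k] Faug f (tflip k H R) := by simp
  -- commutation relations
  have hρρR : (Faug f R ⊗ₜ[k] Faug f R) * R = R * (Faug f R ⊗ₜ[k] Faug f R) := by
    have h := relFwd R f hax R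
    rwa [hA, tflip_tmul] at h
  have hρρRb : (Faug f R ⊗ₜ[k] Faug f R) * tflip k H R
      = tflip k H R * (Faug f R ⊗ₜ[k] Faug f R) := by
    have h := relBwd R f hax R
    rwa [hA, tflip_tmul] at h
  have hσσR : (Faug f (tflip k H R) ⊗ₜ[k] Faug f (tflip k H R)) * R
      = R * (Faug f (tflip k H R) ⊗ₜ[k] Faug f (tflip k H R)) := by
    have h := relFwd R f hax (tflip k H R)
    rwa [hB, tflip_tmul] at h
  have hσσRb : (Faug f (tflip k H R) ⊗ₜ[k] Faug f (tflip k H R)) * tflip k H R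
      = tflip k H R * (Faug f (tflip k H R) ⊗ₜ[k] Faug f (tflip k H R)) := by
    have h := relBwd R f hax (tflip k H R)
    rwa [hB, tflip_tmul] at h
  have hIrel := relI R f hax hhexA
  have hVIrel := relVI R f hax hhexA
  -- z-forms
  have zI : ∀ z : H ⊗[k] H,
      (Faug f (tflip k H R) ⊗ₜ[k] (1:H)) * (R * (((1:H) ⊗ₜ[k] Faug f R) * z))
      = ((1:H) ⊗ₜ[k] Faug f R) * (R * ((Faug f (tflip k H R) ⊗ₜ[k] (1:H)) * z)) := by
    intro z
    calc (Faug f (tflip k H R) ⊗ₜ[k] (1:H)) * (R * (((1:H) ⊗ₜ[k] Faug f R) * z))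
        = (Faug f (tflip k H R) ⊗ₜ[k] (1:H)) * (R * ((1:H) ⊗ₜ[k] Faug f R)) * z := by
          simp only [mul_assoc]
      _ = ((1:H) ⊗ₜ[k] Faug f R) * R * (Faug f (tflip k H R) ⊗ₜ[k] (1:H)) * z := by
          rw [← hIrel]
      _ = ((1:H) ⊗ₜ[k] Faug f R) * (R * ((Faug f (tflip k H R) ⊗ₜ[k] (1:H)) * z)) := by
          simp only [mul_assoc]
  have zVI : ∀ z : H ⊗[k] H,
      ((1:H) ⊗ₜ[k] Faug f (tflip k H R)) * (tflip k H R * ((Faug f R ⊗ₜ[k] (1:H)) * z))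
      = (Faug f R ⊗ₜ[k] (1:H)) * (tflip k H R * (((1:H) ⊗ₜ[k] Faug f (tflip k H R)) * z)) := by
    intro z
    calc ((1:H) ⊗ₜ[k] Faug f (tflip k H R)) * (tflip k H R * ((Faug f R ⊗ₜ[k] (1:H)) * z))
        = ((1:H) ⊗ₜ[k] Faug f (tflip k H R)) * (tflip k H R * (Faug f R ⊗ₜ[k] (1:H))) * z := by
          simp only [mul_assoc]
      _ = (Faug f R ⊗ₜ[k] (1:H)) * tflip k H R * ((1:H) ⊗ₜ[k] Faug f (tflip k H R)) * z := by
          rw [← hVIrel]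
      _ = (Faug f R ⊗ₜ[k] (1:H)) * (tflip k H R * (((1:H) ⊗ₜ[k] Faug f (tflip k H R)) * z)) := by
          simp only [mul_assoc]
  have zPR : ∀ z : H ⊗[k] H,
      (Faug f R ⊗ₜ[k] (1:H)) * (((1:H) ⊗ₜ[k] Faug f R) * (R * z))
      = R * ((Faug f R ⊗ₜ[k] (1:H)) * (((1:H) ⊗ₜ[k] Faug f R) * z)) := by
    intro z
    calc (Faug f R ⊗ₜ[k] (1:H)) * (((1:H) ⊗ₜ[k] Faug f R) * (R * z))
        = (Faug f R ⊗ₜ[k] (1:H)) * ((1:H) ⊗ₜ[k] Faug f R) * R * z := by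
          simp only [mul_assoc]
      _ = (Faug f R ⊗ₜ[k] Faug f R) * R * z := by rw [hPm]
      _ = R * (Faug f R ⊗ₜ[k] Faug f R) * z := by rw [hρρR]
      _ = R * ((Faug f R ⊗ₜ[k] (1:H)) * ((1:H) ⊗ₜ[k] Faug f R)) * z := by rw [hPm]
      _ = R * ((Faug f R ⊗ₜ[k] (1:H)) * (((1:H) ⊗ₜ[k] Faug f R) * z)) := by
          simp only [mul_assoc]
  have zPRb : ∀ z : H ⊗[k] H,
      (Faug f R ⊗ₜ[k] (1:H)) * (((1:H) ⊗ₜ[k] Faug f R) * (tflip k H R * z))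
      = tflip k H R * ((Faug f R ⊗ₜ[k] (1:H)) * (((1:H) ⊗ₜ[k] Faug f R) * z)) := by
    intro z
    calc (Faug f R ⊗ₜ[k] (1:H)) * (((1:H) ⊗ₜ[k] Faug f R) * (tflip k H R * z))
        = (Faug f R ⊗ₜ[k] (1:H)) * ((1:H) ⊗ₜ[k] Faug f R) * tflip k H R * z := by
          simp only [mul_assoc]
      _ = (Faug f R ⊗ₜ[k] Faug f R) * tflip k H R * z := by rw [hPm]
      _ = tflip k H R * (Faug f R ⊗ₜ[k] Faug f R) * z := by rw [hρρRb]
      _ = tflip k H R * ((Faug f R ⊗ₜ[k] (1:H)) * ((1:H) ⊗ₜ[k] Faug f R)) * z := by rw [hPm]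
      _ = tflip k H R * ((Faug f R ⊗ₜ[k] (1:H)) * (((1:H) ⊗ₜ[k] Faug f R) * z)) := by
          simp only [mul_assoc]
  have eQRb : (Faug f (tflip k H R) ⊗ₜ[k] (1:H)) * (((1:H) ⊗ₜ[k] Faug f (tflip k H R)) * tflip k H R)
      = tflip k H R * ((Faug f (tflip k H R) ⊗ₜ[k] (1:H)) * ((1:H) ⊗ₜ[k] Faug f (tflip k H R))) := by
    calc (Faug f (tflip k H R) ⊗ₜ[k] (1:H)) * (((1:H) ⊗ₜ[k] Faug f (tflip k H R)) * tflip k H R)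
        = (Faug f (tflip k H R) ⊗ₜ[k] (1:H)) * ((1:H) ⊗ₜ[k] Faug f (tflip k H R)) * tflip k H R := by
          simp only [mul_assoc]
      _ = (Faug f (tflip k H R) ⊗ₜ[k] Faug f (tflip k H R)) * tflip k H R := by rw [hQm]
      _ = tflip k H R * (Faug f (tflip k H R) ⊗ₜ[k] Faug f (tflip k H R)) := hσσRb
      _ = tflip k H R * ((Faug f (tflip k H R) ⊗ₜ[k] (1:H)) * ((1:H) ⊗ₜ[k] Faug f (tflip k H R))) := by
          rw [hQm]
  have zAcomm : ∀ z : H ⊗[k] H,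
      ((1:H) ⊗ₜ[k] Faug f R) * ((Faug f R ⊗ₜ[k] (1:H)) * z)
      = (Faug f R ⊗ₜ[k] (1:H)) * (((1:H) ⊗ₜ[k] Faug f R) * z) := by
    intro z
    rw [← mul_assoc, ← mul_assoc, hPc, hPm]
  have eCc : ((1:H) ⊗ₜ[k] Faug f (tflip k H R)) * (Faug f (tflip k H R) ⊗ₜ[k] (1:H))
      = (Faug f (tflip k H R) ⊗ₜ[k] (1:H)) * ((1:H) ⊗ₜ[k] Faug f (tflip k H R)) := by
    rw [hQc, hQm]
  -- centrality z-forms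
  have hT1 := central_left (k := k) hθinvc
  have hT2 := central_right (k := k) hθinvc
  have zT1 : ∀ x z : H ⊗[k] H, x * ((θinv ⊗ₜ[k] (1:H)) * z) = (θinv ⊗ₜ[k] (1:H)) * (x * z) := by
    intro x z
    calc x * ((θinv ⊗ₜ[k] (1:H)) * z) = x * (θinv ⊗ₜ[k] (1:H)) * z := by simp only [mul_assoc]
      _ = (θinv ⊗ₜ[k] (1:H)) * x * z := by rw [← hT1 x]
      _ = (θinv ⊗ₜ[k] (1:H)) * (x * z) := by simp only [mul_assoc]
  have zT2 : ∀ x z : H ⊗[k] H, x * (((1:H) ⊗ₜ[k] θinv) * z) = ((1:H) ⊗ₜ[k] θinv) * (x * z) := by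
    intro x z
    calc x * (((1:H) ⊗ₜ[k] θinv) * z) = x * ((1:H) ⊗ₜ[k] θinv) * z := by simp only [mul_assoc]
      _ = ((1:H) ⊗ₜ[k] θinv) * x * z := by rw [← hT2 x]
      _ = ((1:H) ⊗ₜ[k] θinv) * (x * z) := by simp only [mul_assoc]
  -- Δ(θinv)
  have hθθ : ∀ z : H ⊗[k] H, (θ ⊗ₜ[k] θ) * ((θinv ⊗ₜ[k] θinv) * z) = z := by
    intro z
    rw [← mul_assoc, Algebra.TensorProduct.tmul_mul_tmul, hθ,
      ← Algebra.TensorProduct.one_def, one_mul]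
  have hX1 : Bialgebra.comulAlgHom k H θ * ((θinv ⊗ₜ[k] θinv) * (R * tflip k H R)) = 1 := by
    rw [hΔθ]
    calc (tflip k H Rinv * Rinv) * (θ ⊗ₜ[k] θ) * ((θinv ⊗ₜ[k] θinv) * (R * tflip k H R))
        = tflip k H Rinv * (Rinv * ((θ ⊗ₜ[k] θ) * ((θinv ⊗ₜ[k] θinv) * (R * tflip k H R)))) := by
          simp only [mul_assoc]
      _ = tflip k H Rinv * (Rinv * (R * tflip k H R)) := by rw [hθθ]
      _ = tflip k H Rinv * ((Rinv * R) * tflip k H R) := by rw [mul_assoc]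
      _ = tflip k H Rinv * tflip k H R := by rw [hR2, one_mul]
      _ = 1 := by rw [← map_mul, hR2, map_one]
  have hΔθinv : Bialgebra.comulAlgHom k H θinv
      = (θinv ⊗ₜ[k] θinv) * (R * tflip k H R) := by
    have hY : Bialgebra.comulAlgHom k H θinv * Bialgebra.comulAlgHom k H θ = 1 := by
      rw [← map_mul, hθ', map_one]
    calc Bialgebra.comulAlgHom k H θinv
        = Bialgebra.comulAlgHom k H θinv
            * (Bialgebra.comulAlgHom k H θ * ((θinv ⊗ₜ[k] θinv) * (R * tflip k H R))) := by
          rw [hX1, mul_one]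
      _ = (Bialgebra.comulAlgHom k H θinv * Bialgebra.comulAlgHom k H θ)
            * ((θinv ⊗ₜ[k] θinv) * (R * tflip k H R)) := by rw [mul_assoc]
      _ = (θinv ⊗ₜ[k] θinv) * (R * tflip k H R) := by rw [hY, one_mul]
  have hsplitθ : (θinv ⊗ₜ[k] θinv : H ⊗[k] H) = (θinv ⊗ₜ[k] (1:H)) * ((1:H) ⊗ₜ[k] θinv) := by
    simp
  have hFθ : Faug f ((1:H) ⊗ₜ[k] θinv) = θinv := by simp
  -- Δ(K), normal form
  have hΔK : Bialgebra.comulAlgHom k H K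
      = (θinv ⊗ₜ[k] (1:H)) * (((1:H) ⊗ₜ[k] θinv) * (R * (tflip k H R *
          ((Faug f R ⊗ₜ[k] (1:H)) * (((1:H) ⊗ₜ[k] Faug f R) *
            ((Faug f (tflip k H R) ⊗ₜ[k] (1:H)) * ((1:H) ⊗ₜ[k] Faug f (tflip k H R)))))))) := by
    have hKF : K = Faug f (((1:H) ⊗ₜ[k] θinv) * R * tflip k H R) := by
      rw [hKdef, dualTensorId_eq]
    rw [hKF, ← Gaug_comulRight]
    simp only [map_mul, Gaug_comulRight, hFθ]
    rw [hΔθinv, hA, hB, hsplitθ, ← hPm, ← hQm]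
    simp only [mul_assoc]
  have h1 : (θinv * (Faug f R * Faug f (tflip k H R))) ⊗ₜ[k] (1:H)
      = (θinv ⊗ₜ[k] (1:H)) * ((Faug f R ⊗ₜ[k] (1:H)) * (Faug f (tflip k H R) ⊗ₜ[k] (1:H))) := by
    simp
  have h2 : (1:H) ⊗ₜ[k] (θinv * (Faug f R * Faug f (tflip k H R)))
      = ((1:H) ⊗ₜ[k] θinv) * (((1:H) ⊗ₜ[k] Faug f R) * ((1:H) ⊗ₜ[k] Faug f (tflip k H R))) := by
    simp
  have hE3 : (K ⊗ₜ[k] (1 : H)) * R * ((1 : H) ⊗ₜ[k] K) * tflip k H R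
      = (θinv ⊗ₜ[k] (1:H)) * (((1:H) ⊗ₜ[k] θinv) * (R * (tflip k H R *
          ((Faug f R ⊗ₜ[k] (1:H)) * (((1:H) ⊗ₜ[k] Faug f R) *
            ((Faug f (tflip k H R) ⊗ₜ[k] (1:H)) * ((1:H) ⊗ₜ[k] Faug f (tflip k H R)))))))) := by
    rw [hK, h1, h2]
    simp only [mul_assoc]
    rw [zT2, zT2, zT2]
    rw [zI, eQRb, zPR, zPRb]
  have hE4 : R * ((1 : H) ⊗ₜ[k] K) * tflip k H R * (K ⊗ₜ[k] (1 : H))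
      = (θinv ⊗ₜ[k] (1:H)) * (((1:H) ⊗ₜ[k] θinv) * (R * (tflip k H R *
          ((Faug f R ⊗ₜ[k] (1:H)) * (((1:H) ⊗ₜ[k] Faug f R) *
            ((Faug f (tflip k H R) ⊗ₜ[k] (1:H)) * ((1:H) ⊗ₜ[k] Faug f (tflip k H R)))))))) := by
    rw [hK, h1, h2]
    simp only [mul_assoc]
    rw [zT1, zT1, zT1, zT1, zT1]
    rw [zT2]
    rw [zVI, zAcomm, eCc, zPRb]
  refine ⟨?_, ?_, hΔK.trans hE3.symm, hE3.trans hE4.symm⟩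
  · rw [hK]
    exact hUθ.mul (hUρ.mul hUσ)
  · intro b hb
    obtain ⟨h, rfl⟩ := hb
    simp only [dualTensorId_eq]
    have hJcomm : (R * tflip k H R) * Bialgebra.comulAlgHom k H h
        = Bialgebra.comulAlgHom k H h * (R * tflip k H R) := by
      calc R * tflip k H R * Bialgebra.comulAlgHom k H h
          = R * (tflip k H R * Bialgebra.comulAlgHom k H h) := by rw [mul_assoc]
        _ = R * (tflip k H (Bialgebra.comulAlgHom k H h) * tflip k H R) := by rw [← hax' h]
        _ = (R * tflip k H (Bialgebra.comulAlgHom k H h)) * tflip k H R := by rw [mul_assoc]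
        _ = (Bialgebra.comulAlgHom k H h * R) * tflip k H R := by rw [← hax h]
        _ = Bialgebra.comulAlgHom k H h * (R * tflip k H R) := by rw [mul_assoc]
    calc K * Faug f (Bialgebra.comulAlgHom k H h)
        = θinv * ((Faug f R * Faug f (tflip k H R)) * Faug f (Bialgebra.comulAlgHom k H h)) := by
          rw [hK, mul_assoc]
      _ = θinv * (Faug f (Bialgebra.comulAlgHom k H h) * (Faug f R * Faug f (tflip k H R))) := by
          rw [← map_mul, ← map_mul, ← map_mul, hJcomm]
      _ = (θinv * Faug f (Bialgebra.comulAlgHom k H h)) * (Faug f R * Faug f (tflip k H R)) := by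
          rw [mul_assoc]
      _ = (Faug f (Bialgebra.comulAlgHom k H h) * θinv) * (Faug f R * Faug f (tflip k H R)) := by
          rw [hθinvc]
      _ = Faug f (Bialgebra.comulAlgHom k H h) * K := by rw [hK, mul_assoc]

end Hopf
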